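/- Let (S, L) be a total abstract cubic, G_S its reflection group, and B₀ the normal closure in G_S of {t_a t_b t_c t_{a'} t_b t_{c'} : (a,b,c) ∈ L, (a',b,c') ∈ L}. If x ≈ x' (where ≈ is the universal admissible equivalence, i.e. x ≈_i x' for some i), then t_x t_{x'} ∈ B₀. -/

import Mathlib

/-- The defining relators of the reflection group of an abstract cubic `(S, L)`:
`(t_x)^2` for all `x`, and `(t_x t_y t_z)^2` for all collinear triples `(x,y,z) ∈ L`. -/
def cubicRels (S : Type*) (L : S → S → S → Prop) : Set (FreeGroup S) :=
  {r | (∃ x : S, r = FreeGroup.of x ^ 2) ∨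
    ∃ x y z : S, L x y z ∧ r = (FreeGroup.of x * FreeGroup.of y * FreeGroup.of z) ^ 2}

/-- The reflection group `G_S` of an abstract cubic, as a presented group. -/
abbrev ReflGroup (S : Type*) (L : S → S → S → Prop) : Type _ :=
  PresentedGroup (cubicRels S L)

/-- The generator (reflection) `t_x` of the reflection group. -/
def tgen (S : Type*) (L : S → S → S → Prop) (x : S) : ReflGroup S L :=
  PresentedGroup.of x

/-- The approximating equivalence relations `≈_i` of §3: `≈_0` is equality, and `≈_{i+1}` is the
transitive closure of the relation `∼_{i+1}` (see `simR`). -/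
def approxR {S : Type*} (L : S → S → S → Prop) : ℕ → S → S → Prop
  | 0 => Eq
  | i + 1 => Relation.TransGen (fun x x' => x = x' ∨ ∃ u v u' v' : S,
      approxR L i u u' ∧ approxR L i v v' ∧ L u v x ∧ L u' v' x')

/-- The relations `∼_i` of §3: `∼_0` is equality, and `x ∼_{i+1} x'` iff `x = x'` or there are
`u ≈_i u'`, `v ≈_i v'` with `(u,v,x) ∈ L` and `(u',v',x') ∈ L`. -/
def simR {S : Type*} (L : S → S → S → Prop) : ℕ → S → S → Prop
  | 0 => Eq
  | i + 1 => fun x x' => x = x' ∨ ∃ u v u' v' : S,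
      approxR L i u u' ∧ approxR L i v v' ∧ L u v x ∧ L u' v' x'

/-- An equivalence relation `r` on `S` is admissible if on `S/r` the induced collinearity
relation `L/r` (three classes are collinear iff they contain representatives forming a
collinear triple) defines a composition: for all classes `X, Y` there is a unique class `Z`
with `(X,Y,Z) ∈ L/r`. -/
def AdmissibleRel {S : Type*} (L : S → S → S → Prop) (r : S → S → Prop) : Prop :=
  Equivalence r ∧
  ∀ x y : S, ∃ z : S,
    (∃ x' y' z' : S, r x x' ∧ r y y' ∧ r z z' ∧ L x' y' z') ∧
    ∀ w : S, (∃ x' y' w' : S, r x x' ∧ r y y' ∧ r w w' ∧ L x' y' w') → r z w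

/-- The set of generators of the subgroup `B₀ ⊆ G_S`: elements `t_a t_b t_c t_{a'} t_b t_{c'}`
for collinear triples `(a,b,c) ∈ L` and `(a',b,c') ∈ L` sharing the middle point `b`.
`B₀` itself is the normal closure of this set in `G_S`. -/
def B0Gens (S : Type*) (L : S → S → S → Prop) : Set (ReflGroup S L) :=
  {g | ∃ a b c a' c' : S, L a b c ∧ L a' b c' ∧
    g = tgen S L a * tgen S L b * tgen S L c * tgen S L a' * tgen S L b * tgen S L c'}

/-- The subgroup `Bⁱ ⊆ G_S`: the normal closure of `{t_u t_{u'} : u ∼_i u'}`. -/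
def Bn (S : Type*) (L : S → S → S → Prop) (i : ℕ) : Subgroup (ReflGroup S L) :=
  Subgroup.normalClosure {g | ∃ u u' : S, simR L i u u' ∧ g = tgen S L u * tgen S L u'}

lemma mk_rel_eq_one {S : Type*} {L : S → S → S → Prop} {r : FreeGroup S}
    (h : r ∈ cubicRels S L) :
    (QuotientGroup.mk r : ReflGroup S L) = 1 := by
  rw [QuotientGroup.eq_one_iff]
  exact Subgroup.subset_normalClosure h

lemma tgen_sq {S : Type*} (L : S → S → S → Prop) (x : S) :
    tgen S L x * tgen S L x = 1 := by
  have := mk_rel_eq_one (L := L) (Or.inl ⟨x, rfl⟩)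
  simp only [sq] at this
  exact this

lemma tgen_triple {S : Type*} {L : S → S → S → Prop} {x y z : S} (h : L x y z) :
    (tgen S L x * tgen S L y * tgen S L z) * (tgen S L x * tgen S L y * tgen S L z) = 1 := by
  have := mk_rel_eq_one (L := L) (Or.inr ⟨x, y, z, h, rfl⟩)
  simp only [sq] at this
  exact this

lemma tgen_inv {S : Type*} (L : S → S → S → Prop) (x : S) :
    (tgen S L x)⁻¹ = tgen S L x :=
  inv_eq_of_mul_eq_one_right (tgen_sq L x)

/-- Core step: triples sharing the middle point, with first points congruent mod N. -/
lemma step2 {S : Type*} {L : S → S → S → Prop} {u v x u' x' : S}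
    (h1 : L u v x) (h2 : L u' v x')
    (hu : tgen S L u * tgen S L u' ∈ Subgroup.normalClosure (B0Gens S L)) :
    tgen S L x * tgen S L x' ∈ Subgroup.normalClosure (B0Gens S L) := by
  set N := Subgroup.normalClosure (B0Gens S L) with hN
  set a := tgen S L u; set b := tgen S L v; set c := tgen S L x
  set a' := tgen S L u'; set c' := tgen S L x'
  have g1 : a * b * c * a' * b * c' ∈ N :=
    Subgroup.subset_normalClosure ⟨u, v, x, u', x', h1, h2, rfl⟩
  have ha' : a' * a' = 1 := tgen_sq L u'
  have habc : (a * b * c) * (a * b * c) = 1 := tgen_triple h1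
  have hinv : (a * b * c)⁻¹ = a * b * c := inv_eq_of_mul_eq_one_right habc
  have hcinv : c⁻¹ = c := tgen_inv L x
  have key : c * c' =
      ((a * b * c)⁻¹ * (a * a') * (a * b * c)) * ((a * b * c)⁻¹ * (a' * b * c')) := by
    calc c * c' = c⁻¹ * c' := by rw [hcinv]
    _ = (a * b * c)⁻¹ * (a * b * c') := by group
    _ = (a * b * c)⁻¹ * (a * (a' * a') * b * c') := by rw [ha', mul_one]
    _ = ((a * b * c)⁻¹ * (a * a') * (a * b * c)) * ((a * b * c)⁻¹ * (a' * b * c')) := by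
        group
  rw [key]
  have hNn : N.Normal := Subgroup.normalClosure_normal
  refine mul_mem ?_ ?_
  · have := hNn.conj_mem _ hu (a * b * c)⁻¹
    simpa using this
  · have h3 : (a * b * c)⁻¹ * (a' * b * c') = a * b * c * a' * b * c' := by
      rw [hinv]; group
    rw [h3]; exact g1

lemma step1 {S : Type*} {L : S → S → S → Prop}
    (hsym₁ : ∀ x y z, L x y z → L y x z)
    (htotal : ∀ x y : S, ∃ z : S, L x y z)
    {u v x u' v' x' : S} (h1 : L u v x) (h2 : L u' v' x')
    (hu : tgen S L u * tgen S L u' ∈ Subgroup.normalClosure (B0Gens S L))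
    (hv : tgen S L v * tgen S L v' ∈ Subgroup.normalClosure (B0Gens S L)) :
    tgen S L x * tgen S L x' ∈ Subgroup.normalClosure (B0Gens S L) := by
  obtain ⟨w, hw⟩ := htotal u' v
  have hxw : tgen S L x * tgen S L w ∈ Subgroup.normalClosure (B0Gens S L) :=
    step2 h1 hw hu
  have hwx' : tgen S L w * tgen S L x' ∈ Subgroup.normalClosure (B0Gens S L) :=
    step2 (hsym₁ _ _ _ hw) (hsym₁ _ _ _ h2) hv
  have : tgen S L x * tgen S L x' =
      (tgen S L x * tgen S L w) * (tgen S L w * tgen S L x') := by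
    have := tgen_sq L w
    calc tgen S L x * tgen S L x' = tgen S L x * 1 * tgen S L x' := by rw [mul_one]
    _ = tgen S L x * (tgen S L w * tgen S L w) * tgen S L x' := by rw [this]
    _ = (tgen S L x * tgen S L w) * (tgen S L w * tgen S L x') := by group
  rw [this]
  exact mul_mem hxw hwx'

lemma tgen_trans {S : Type*} {L : S → S → S → Prop} {x y z : S}
    (h1 : tgen S L x * tgen S L y ∈ Subgroup.normalClosure (B0Gens S L))
    (h2 : tgen S L y * tgen S L z ∈ Subgroup.normalClosure (B0Gens S L)) :
    tgen S L x * tgen S L z ∈ Subgroup.normalClosure (B0Gens S L) := by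
  have hy := tgen_sq L y
  have : tgen S L x * tgen S L z =
      (tgen S L x * tgen S L y) * (tgen S L y * tgen S L z) := by
    calc tgen S L x * tgen S L z = tgen S L x * 1 * tgen S L z := by rw [mul_one]
    _ = tgen S L x * (tgen S L y * tgen S L y) * tgen S L z := by rw [hy]
    _ = _ := by group
  rw [this]; exact mul_mem h1 h2

lemma key_ind {S : Type*} {L : S → S → S → Prop}
    (hsym₁ : ∀ x y z, L x y z → L y x z)
    (htotal : ∀ x y : S, ∃ z : S, L x y z) :
    ∀ i x x', approxR L i x x' →
      tgen S L x * tgen S L x' ∈ Subgroup.normalClosure (B0Gens S L) := by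
  intro i
  induction i with
  | zero =>
    intro x x' h
    cases h
    exact (tgen_sq L x) ▸ one_mem _
  | succ i ih =>
    intro x x' h
    induction h with
    | single hstep =>
      rcases hstep with rfl | ⟨u, v, u', v', hu, hv, h1, h2⟩
      · exact (tgen_sq L x) ▸ one_mem _
      · exact step1 hsym₁ htotal h1 h2 (ih _ _ hu) (ih _ _ hv)
    | tail _ hstep ihy =>
      rename_i y z _
      refine tgen_trans ihy ?_
      rcases hstep with rfl | ⟨u, v, u', v', hu, hv, h1, h2⟩
      · exact (tgen_sq L y) ▸ one_mem _
      · exact step1 hsym₁ htotal h1 h2 (ih _ _ hu) (ih _ _ hv)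

/-- if `x ≈ x'` (i.e. `x ≈_i x'` for some `i`, the universal admissible
equivalence), then `t_x t_{x'} ∈ B₀`. -/
theorem stmt_12 {S : Type*} (L : S → S → S → Prop)
    (hsym₁ : ∀ x y z, L x y z → L y x z)
    (hsym₂ : ∀ x y z, L x y z → L x z y)
    (huniq : ∀ x y z z', L x y z → L x y z' → x ≠ y → z = z')
    (htotal : ∀ x y : S, ∃ z : S, L x y z)
    (x x' : S) (h : ∃ i, approxR L i x x') :
    tgen S L x * tgen S L x' ∈ Subgroup.normalClosure (B0Gens S L) := by
  obtain ⟨i, h⟩ := h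
  exact key_ind hsym₁ htotal i x x' h
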